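/- Let φ be a finite potent endomorphism of a k-vector space V and W a φ-invariant subspace of V. Then the induced endomorphisms of W and V/W are finite potent and tr_V(φ) = tr_W(φ|_W) + tr_{V/W}(φ̄), where φ̄ is the induced map on V/W. -/

import Mathlib

open LinearMap Module

section TraceAux
variable {k : Type*} [Field k]

lemma trace_eq_of_equivariant {M N : Type*} [AddCommGroup M] [Module k M]
    [AddCommGroup N] [Module k N] (e : M ≃ₗ[k] N) (f : M →ₗ[k] M) (g : N →ₗ[k] N)
    (hcomm : ∀ x, e (f x) = g (e x)) : trace k M f = trace k N g := by
  have : g = e.conj f := by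
    ext x
    rw [LinearEquiv.conj_apply]
    simp only [coe_comp, LinearEquiv.coe_coe, Function.comp_apply, hcomm,
      LinearEquiv.apply_symm_apply]
  rw [this, trace_conj']

lemma trace_prod_add {M N : Type*} [AddCommGroup M] [Module k M]
    [AddCommGroup N] [Module k N] [FiniteDimensional k M] [FiniteDimensional k N]
    (f : (M × N) →ₗ[k] (M × N)) :
    trace k (M × N) f =
      trace k M (fst k M N ∘ₗ f ∘ₗ inl k M N) +
        trace k N (snd k M N ∘ₗ f ∘ₗ inr k M N) := by
  have hf : f = (inl k M N ∘ₗ (fst k M N ∘ₗ f)) + (inr k M N ∘ₗ (snd k M N ∘ₗ f)) := by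
    ext x <;> simp
  calc trace k (M × N) f
      = trace k (M × N) (inl k M N ∘ₗ (fst k M N ∘ₗ f))
        + trace k (M × N) (inr k M N ∘ₗ (snd k M N ∘ₗ f)) := by
        conv_lhs => rw [hf]
        exact map_add _ _ _
    _ = trace k M ((fst k M N ∘ₗ f) ∘ₗ inl k M N)
        + trace k N ((snd k M N ∘ₗ f) ∘ₗ inr k M N) := by
        rw [trace_comp_comm' (inl k M N) (fst k M N ∘ₗ f),
          trace_comp_comm' (inr k M N) (snd k M N ∘ₗ f)]
    _ = _ := by rw [comp_assoc, comp_assoc]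

lemma trace_restrict_add_trace_mapQ {M : Type*} [AddCommGroup M] [Module k M]
    [FiniteDimensional k M] (p : Submodule k M) (f : M →ₗ[k] M) (h : ∀ x ∈ p, f x ∈ p) :
    trace k M f =
      trace k p (f.restrict h) + trace k (M ⧸ p) (p.mapQ p f (fun x hx => h x hx)) := by
  obtain ⟨q, hq⟩ := p.exists_isCompl
  let e : (p × q) ≃ₗ[k] M := Submodule.prodEquivOfIsCompl p q hq
  have h1 : trace k M f = trace k (p × q) (e.symm.conj f) := (trace_conj' f e.symm).symm
  rw [h1, trace_prod_add]
  congr 1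
  · congr 1
    ext x
    have he : e (x, 0) = (x : M) := by
      simp [e, Submodule.coe_prodEquivOfIsCompl']
    have hfx : f (x : M) ∈ p := h _ x.2
    have h2 : e.symm (f (x : M)) = ((⟨f (x : M), hfx⟩ : p), 0) :=
      Submodule.prodEquivOfIsCompl_symm_apply_left p q hq (⟨f (x : M), hfx⟩ : p)
    simp [LinearEquiv.conj_apply, he, h2]
  · refine trace_eq_of_equivariant (Submodule.quotientEquivOfIsCompl p q hq).symm _ _ ?_
    intro x
    have hm : ∀ m : M, (Submodule.Quotient.mk (((e.symm m).2 : q) : M) : M ⧸ p)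
        = Submodule.Quotient.mk m := by
      intro m
      rw [Submodule.Quotient.eq]
      have hsum : ((e.symm m).1 : M) + ((e.symm m).2 : M) = m := by
        have := e.apply_symm_apply m
        rwa [Submodule.coe_prodEquivOfIsCompl'] at this
      have h3 : (((e.symm m).2 : M)) - m = -((e.symm m).1 : M) := by
        apply eq_neg_of_add_eq_zero_left
        rw [sub_add_eq_add_sub, add_comm, hsum, sub_self]
      rw [h3]
      exact p.neg_mem ((e.symm m).1).2
    have he2 : ∀ y : q, (Submodule.quotientEquivOfIsCompl p q hq).symm y
        = Submodule.Quotient.mk (y : M) :=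
      fun y => Submodule.quotientEquivOfIsCompl_symm_apply p q hq y
    have he' : e (0, x) = (x : M) := by
      simp [e, Submodule.coe_prodEquivOfIsCompl']
    simp only [coe_comp, LinearEquiv.coe_coe, Function.comp_apply, inr_apply,
      LinearEquiv.conj_apply, snd_apply, he2, LinearEquiv.symm_symm]
    rw [he', hm (f (x : M)), Submodule.mapQ_apply]

lemma trace_eq_restrict_of_quot_nilpotent {M : Type*} [AddCommGroup M] [Module k M]
    [FiniteDimensional k M] (p : Submodule k M) (f : M →ₗ[k] M) (h : ∀ x ∈ p, f x ∈ p)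
    (hn : IsNilpotent (p.mapQ p f (fun x hx => h x hx))) :
    trace k M f = trace k p (f.restrict h) := by
  rw [trace_restrict_add_trace_mapQ p f h,
    (isNilpotent_trace_of_isNilpotent hn).eq_zero, add_zero]

variable {V : Type*} [AddCommGroup V] [Module k V]

lemma trace_restrict_eq_of_pow_le (φ : V →ₗ[k] V) (A T : Submodule k V) (hAT : A ≤ T)
    (hA : ∀ x ∈ A, φ x ∈ A) (hT : ∀ x ∈ T, φ x ∈ T) [FiniteDimensional k T]
    (m : ℕ) (hm : ∀ x, x ∈ T → (φ ^ m) x ∈ A) :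
    trace k T (φ.restrict hT) = trace k A (φ.restrict hA) := by
  set p : Submodule k T := A.comap T.subtype with hp_def
  have hp : ∀ x ∈ p, (φ.restrict hT) x ∈ p := by
    intro x hx
    simp only [hp_def, Submodule.mem_comap, Submodule.coe_subtype] at hx ⊢
    rw [restrict_coe_apply]
    exact hA _ hx
  have hle : p ≤ p.comap (φ.restrict hT) := fun x hx => hp x hx
  have hnil : IsNilpotent (p.mapQ p (φ.restrict hT) (fun x hx => hp x hx)) := by
    refine ⟨m, ?_⟩
    rw [← Submodule.mapQ_pow p hle]
    ext x
    simp only [coe_comp, Function.comp_apply, Submodule.mkQ_apply, Submodule.mapQ_apply,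
      LinearMap.zero_apply, Submodule.Quotient.mk_eq_zero]
    simp only [hp_def, Submodule.mem_comap, Submodule.coe_subtype]
    rw [Module.End.pow_restrict m hT, restrict_coe_apply]
    exact hm _ x.2
  rw [trace_eq_restrict_of_quot_nilpotent p (φ.restrict hT) hp hnil]
  refine trace_eq_of_equivariant (Submodule.comapSubtypeEquivOfLe hAT) _ _ ?_
  intro x
  apply Subtype.ext
  simp [Submodule.comapSubtypeEquivOfLe, restrict_apply]

end TraceAux

/-- An endomorphism is finite potent if some power has finite-dimensional range. -/
def IsFinitePotent {k V : Type*} [Field k] [AddCommGroup V] [Module k V]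
    (φ : V →ₗ[k] V) : Prop :=
  ∃ n : ℕ, FiniteDimensional k (LinearMap.range (φ ^ n))

/-- `c` is a value of Tate's trace of `φ`: the ordinary trace of the restriction of `φ` to
any finite-dimensional `φ`-invariant subspace `W` with `φⁿ V ⊆ W` for some `n` equals `c`. -/
def TateTraceSpec {k V : Type*} [Field k] [AddCommGroup V] [Module k V]
    (φ : V →ₗ[k] V) (c : k) : Prop :=
  ∀ (W : Submodule k V) (hW : ∀ x ∈ W, φ x ∈ W), FiniteDimensional k W →
    (∃ n : ℕ, LinearMap.range (φ ^ n) ≤ W) →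
    LinearMap.trace k W (φ.restrict hW) = c

open Classical in
/-- Tate's trace of a finite potent endomorphism. -/
noncomputable def tateTrace {k V : Type*} [Field k] [AddCommGroup V] [Module k V]
    (φ : V →ₗ[k] V) : k :=
  if h : ∃ c, TateTraceSpec φ c then h.choose else 0

section TateAux
variable {k V : Type*} [Field k] [AddCommGroup V] [Module k V]

lemma tateTraceSpec_of_good (φ : V →ₗ[k] V) (U : Submodule k V)
    (hU : ∀ x ∈ U, φ x ∈ U) [FiniteDimensional k U] (n : ℕ)
    (hle : LinearMap.range (φ ^ n) ≤ U) :
    TateTraceSpec φ (trace k U (φ.restrict hU)) := by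
  intro W' hW' hfd' hex
  obtain ⟨m, hm⟩ := hex
  haveI := hfd'
  set T : Submodule k V := U ⊔ W' with hT_def
  have hT : ∀ x ∈ T, φ x ∈ T := by
    intro x hx
    rw [hT_def, Submodule.mem_sup] at hx ⊢
    obtain ⟨u, hu, w, hw, rfl⟩ := hx
    exact ⟨φ u, hU u hu, φ w, hW' w hw, (map_add φ u w).symm⟩
  haveI : FiniteDimensional k T := Submodule.finiteDimensional_sup U W'
  have h1 : trace k T (φ.restrict hT) = trace k U (φ.restrict hU) :=
    trace_restrict_eq_of_pow_le φ U T le_sup_left hU hT n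
      (fun x _ => hle (LinearMap.mem_range_self _ x))
  have h2 : trace k T (φ.restrict hT) = trace k W' (φ.restrict hW') :=
    trace_restrict_eq_of_pow_le φ W' T le_sup_right hW' hT m
      (fun x _ => hm (LinearMap.mem_range_self _ x))
  rw [← h2, h1]

lemma tateTrace_eq_good (φ : V →ₗ[k] V) (U : Submodule k V)
    (hU : ∀ x ∈ U, φ x ∈ U) [hfd : FiniteDimensional k U] (n : ℕ)
    (hle : LinearMap.range (φ ^ n) ≤ U) :
    tateTrace φ = trace k U (φ.restrict hU) := by
  have hspec := tateTraceSpec_of_good φ U hU n hle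
  have hex : ∃ c, TateTraceSpec φ c := ⟨_, hspec⟩
  rw [tateTrace, dif_pos hex]
  exact (hex.choose_spec U hU hfd ⟨n, hle⟩).symm

end TateAux

theorem tateTrace_additive_on_invariant_subspace
    {k V : Type*} [Field k] [AddCommGroup V] [Module k V]
    (φ : V →ₗ[k] V) (hφ : IsFinitePotent φ)
    (W : Submodule k V) (hW : ∀ x ∈ W, φ x ∈ W) :
    IsFinitePotent (φ.restrict hW) ∧
    IsFinitePotent (W.mapQ W φ (fun x hx => hW x hx)) ∧
    tateTrace φ =
      tateTrace (φ.restrict hW) + tateTrace (W.mapQ W φ (fun x hx => hW x hx)) := by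
  classical
  obtain ⟨n, hfin⟩ := hφ
  haveI := hfin
  set φ' : W →ₗ[k] W := φ.restrict hW with hφ'_def
  set ψ : (V ⧸ W) →ₗ[k] (V ⧸ W) := W.mapQ W φ (fun x hx => hW x hx) with hψ_def
  set U : Submodule k V := LinearMap.range (φ ^ n) with hU_def
  have hUinv : ∀ x ∈ U, φ x ∈ U := by
    rintro x ⟨y, rfl⟩
    exact ⟨φ y, by rw [← Module.End.mul_apply, ← pow_succ, ← Module.End.mul_apply, ← pow_succ']⟩
  -- the subspace of W
  set B : Submodule k W := Submodule.comap W.subtype U with hB_def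
  have hBinv : ∀ x ∈ B, φ' x ∈ B := by
    intro x hx
    simp only [hB_def, Submodule.mem_comap, Submodule.coe_subtype] at hx ⊢
    rw [hφ'_def, restrict_coe_apply]
    exact hUinv _ hx
  haveI hBfd : FiniteDimensional k B := by
    refine FiniteDimensional.of_injective
      (LinearMap.codRestrict U (W.subtype ∘ₗ B.subtype) (fun x => x.2)) ?_
    intro a b hab
    have h0 : ((a : W) : V) = ((b : W) : V) := congrArg (fun z : U => (z : V)) hab
    exact Subtype.ext (Subtype.ext h0)
  have hBle : LinearMap.range (φ' ^ n) ≤ B := by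
    rintro x ⟨y, rfl⟩
    simp only [hB_def, Submodule.mem_comap, Submodule.coe_subtype]
    rw [hφ'_def, Module.End.pow_restrict n hW, restrict_coe_apply]
    exact ⟨(y : V), rfl⟩
  -- the subspace of V ⧸ W
  set Q : Submodule k (V ⧸ W) := Submodule.map W.mkQ U with hQ_def
  haveI hQfd : FiniteDimensional k Q := Module.Finite.map U W.mkQ
  have hWle : W ≤ W.comap φ := fun x hx => hW x hx
  have hψpow : ψ ^ n = W.mapQ W (φ ^ n) (W.le_comap_pow_of_le_comap hWle n) := by
    rw [hψ_def, Submodule.mapQ_pow W hWle]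
  have hQinv : ∀ x ∈ Q, ψ x ∈ Q := by
    rintro x hx
    rw [hQ_def, Submodule.mem_map] at hx
    obtain ⟨u, hu, rfl⟩ := hx
    rw [hψ_def, Submodule.mkQ_apply, Submodule.mapQ_apply, ← Submodule.mkQ_apply]
    exact Submodule.mem_map_of_mem (hUinv u hu)
  have hQle : LinearMap.range (ψ ^ n) ≤ Q := by
    rintro x ⟨y, rfl⟩
    obtain ⟨v, rfl⟩ := W.mkQ_surjective y
    rw [hψpow, Submodule.mkQ_apply, Submodule.mapQ_apply, ← Submodule.mkQ_apply]
    exact Submodule.mem_map_of_mem ⟨v, rfl⟩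
  refine ⟨⟨n, Submodule.finiteDimensional_of_le hBle⟩,
    ⟨n, Submodule.finiteDimensional_of_le hQle⟩, ?_⟩
  rw [tateTrace_eq_good φ U hUinv n le_rfl, tateTrace_eq_good φ' B hBinv n hBle,
    tateTrace_eq_good ψ Q hQinv n hQle]
  -- now the finite-dimensional additivity
  set p : Submodule k U := Submodule.comap U.subtype W with hp_def
  have hpinv : ∀ x ∈ p, (φ.restrict hUinv) x ∈ p := by
    intro x hx
    simp only [hp_def, Submodule.mem_comap, Submodule.coe_subtype] at hx ⊢
    rw [restrict_coe_apply]
    exact hW _ hx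
  rw [trace_restrict_add_trace_mapQ p (φ.restrict hUinv) hpinv]
  congr 1
  · -- submodule part
    refine trace_eq_of_equivariant
      (⟨⟨⟨fun x => ⟨⟨(x : U), x.2⟩, (x : U).2⟩, fun _ _ => rfl⟩, fun _ _ => rfl⟩,
        fun y => ⟨⟨(y : W), y.2⟩, (y : W).2⟩, fun _ => rfl, fun _ => rfl⟩ :
        p ≃ₗ[k] B) _ _ ?_
    intro x
    apply Subtype.ext
    apply Subtype.ext
    simp [restrict_coe_apply, hφ'_def]
  · -- quotient part
    set g : U →ₗ[k] Q :=
      LinearMap.codRestrict Q (W.mkQ ∘ₗ U.subtype)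
        (fun x => Submodule.mem_map_of_mem x.2) with hg_def
    have hgker : p ≤ LinearMap.ker g := by
      intro x hx
      rw [LinearMap.mem_ker]
      apply Subtype.ext
      simp only [hg_def, LinearMap.codRestrict_apply, coe_comp, Function.comp_apply,
        Submodule.coe_subtype, Submodule.mkQ_apply, ZeroMemClass.coe_zero]
      exact (Submodule.Quotient.mk_eq_zero W).mpr hx
    have hkerg : LinearMap.ker g ≤ p := by
      intro x hx
      rw [LinearMap.mem_ker] at hx
      have : W.mkQ (x : V) = 0 := congrArg Subtype.val hx
      rw [Submodule.mkQ_apply, Submodule.Quotient.mk_eq_zero] at this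
      exact this
    have hgsurj : Function.Surjective g := by
      rintro ⟨x, hx⟩
      rw [hQ_def, Submodule.mem_map] at hx
      obtain ⟨u, hu, rfl⟩ := hx
      exact ⟨⟨u, hu⟩, rfl⟩
    have hinj : Function.Injective (p.liftQ g hgker) := by
      rw [← LinearMap.ker_eq_bot]
      exact Submodule.ker_liftQ_eq_bot p g hgker hkerg
    have hsurj : Function.Surjective (p.liftQ g hgker) := by
      rw [← LinearMap.range_eq_top, Submodule.range_liftQ, LinearMap.range_eq_top]
      exact hgsurj
    refine trace_eq_of_equivariant (LinearEquiv.ofBijective (p.liftQ g hgker) ⟨hinj, hsurj⟩)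
      _ _ ?_
    intro x
    obtain ⟨y, rfl⟩ := Submodule.Quotient.mk_surjective p x
    apply Subtype.ext
    simp only [LinearEquiv.ofBijective_apply, Submodule.mapQ_apply, Submodule.liftQ_apply,
      hg_def, LinearMap.codRestrict_apply, coe_comp, Function.comp_apply,
      Submodule.coe_subtype, Submodule.mkQ_apply, restrict_coe_apply, hψ_def]
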